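/- The iterates of the 2-dimensional Q1(δ=0) open boundary reduction map φ(x₁,x₂) = ((x₁+(c²−1)x₂)/c², x₂(x₁+(c²−1)x₂)/(c²x₁)) satisfy φᴺ(x₁,x₂) = (x₁·rᴺ, x₂·rᴺ) where r = (x₁+(c²−1)x₂)/(c²x₁), for all N ≥ 0, provided x₁ ≠ 0, c ≠ 0 and all intermediate first coordinates are nonzero. In particular the ratio x₁/x₂ is invariant under φ (assuming x₂ ≠ 0). -/

import Mathlib

/-- Iterates of the 2-dimensional Q1(δ=0) open boundary reduction map:
`φᴺ(x₁,x₂) = (x₁ rᴺ, x₂ rᴺ)` with `r = (x₁+(c²-1)x₂)/(c²x₁)`, and invariance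
of the ratio `x₁/x₂`. -/
theorem q1_2d_iterates {K : Type*} [Field K] (c : K) (hc : c ≠ 0) :
    let φ : K × K → K × K := fun p =>
      ((p.1 + (c^2 - 1)*p.2)/c^2, p.2*(p.1 + (c^2 - 1)*p.2)/(c^2*p.1))
    ∀ (x₁ x₂ : K) (N : ℕ), x₁ ≠ 0 →
      (∀ k < N, (φ^[k] (x₁, x₂)).1 ≠ 0) →
      φ^[N] (x₁, x₂) = (x₁ * ((x₁ + (c^2 - 1)*x₂)/(c^2*x₁))^N,
                        x₂ * ((x₁ + (c^2 - 1)*x₂)/(c^2*x₁))^N) ∧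
      (x₂ ≠ 0 → x₁ + (c^2 - 1)*x₂ ≠ 0 →
        (φ (x₁, x₂)).1 / (φ (x₁, x₂)).2 = x₁ / x₂) := by
  intro φ x₁ x₂ N hx₁ hnz
  constructor
  · induction N with
    | zero => simp
    | succ n ih =>
      have ih' := ih (fun k hk => hnz k (by omega))
      have hn : (φ^[n] (x₁, x₂)).1 ≠ 0 := hnz n (by omega)
      rw [ih'] at hn
      simp only at hn
      have hr : ((x₁ + (c^2 - 1)*x₂)/(c^2*x₁))^n ≠ 0 := by
        intro h; rw [h, mul_zero] at hn; exact hn rfl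
      rw [Function.iterate_succ_apply', ih']
      show ((x₁ * _ + (c^2 - 1)*(x₂ * _))/c^2,
        (x₂ * _)*(x₁ * _ + (c^2 - 1)*(x₂ * _))/(c^2*(x₁ * _))) = _
      set r := (x₁ + (c ^ 2 - 1) * x₂) / (c ^ 2 * x₁) with hrdef
      refine Prod.ext ?_ ?_ <;> rw [pow_succ r n]
      · show (x₁ * r ^ n + (c ^ 2 - 1) * (x₂ * r ^ n)) / c ^ 2 = x₁ * (r ^ n * r)
        rw [hrdef]
        field_simp
      · show x₂ * r ^ n * (x₁ * r ^ n + (c ^ 2 - 1) * (x₂ * r ^ n)) / (c ^ 2 * (x₁ * r ^ n))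
            = x₂ * (r ^ n * r)
        rw [show x₂ * r ^ n * (x₁ * r ^ n + (c ^ 2 - 1) * (x₂ * r ^ n))
              = (x₂ * r ^ n * (x₁ + (c ^ 2 - 1) * x₂)) * r ^ n from by ring,
            show c ^ 2 * (x₁ * r ^ n) = (c ^ 2 * x₁) * r ^ n from by ring,
            mul_div_mul_right _ _ hr, mul_div_assoc, ← hrdef]
        ring
  · intro hx₂ hs
    show ((x₁ + (c^2 - 1)*x₂)/c^2) / (x₂*(x₁ + (c^2 - 1)*x₂)/(c^2*x₁)) = x₁ / x₂
    field_simp
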